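/- Under hypotheses (i), (ii), (iii), there exist measurable events Ω₀ and Ω₁ with P(Ω₀ ∪ Ω₁) = 1 such that U_n(ω) → 0 for every ω ∈ Ω₀ and U_n(ω) → 1 for every ω ∈ Ω₁; equivalently, for P-almost every ω the sequence U_n(ω) converges and its limit is 0 or 1. -/

import Mathlib

open MeasureTheory Filter

open scoped NNReal ENNReal

namespace PolarAux





lemma iterSqrt_nonneg (m : ℕ) (u : ℝ) : 0 ≤ Real.sqrt^[m] u ∨ m = 0 := by
  cases m with
  | zero => exact Or.inr rfl
  | succ k =>
    left
    rw [Function.iterate_succ_apply']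
    exact Real.sqrt_nonneg _

lemma iterSqrt_nonneg' (m : ℕ) {u : ℝ} (hu : 0 ≤ u) : 0 ≤ Real.sqrt^[m] u := by
  induction m with
  | zero => simpa
  | succ k ih => rw [Function.iterate_succ_apply']; exact Real.sqrt_nonneg _

lemma iterSqrt_le_one (m : ℕ) {u : ℝ} (hu0 : 0 ≤ u) (hu1 : u ≤ 1) :
    Real.sqrt^[m] u ≤ 1 := by
  induction m with
  | zero => simpa
  | succ k ih =>
    rw [Function.iterate_succ_apply']
    rw [show (1:ℝ) = Real.sqrt 1 by simp]
    exact Real.sqrt_le_sqrt ih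

lemma one_le_iterSqrt (m : ℕ) {u : ℝ} (hu : 1 ≤ u) : 1 ≤ Real.sqrt^[m] u := by
  induction m with
  | zero => simpa
  | succ k ih =>
    rw [Function.iterate_succ_apply']
    rw [show (1:ℝ) = Real.sqrt 1 by simp]
    exact Real.sqrt_le_sqrt ih

lemma iterSqrt_mono (m : ℕ) {u v : ℝ} (h : u ≤ v) :
    Real.sqrt^[m] u ≤ Real.sqrt^[m] v := by
  induction m with
  | zero => simpa
  | succ k ih =>
    rw [Function.iterate_succ_apply', Function.iterate_succ_apply']
    exact Real.sqrt_le_sqrt ih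

lemma iterSqrt_mul (m : ℕ) {u v : ℝ} (hu : 0 ≤ u) (hv : 0 ≤ v) :
    Real.sqrt^[m] (u * v) = Real.sqrt^[m] u * Real.sqrt^[m] v := by
  induction m with
  | zero => simp
  | succ k ih =>
    rw [Function.iterate_succ_apply', Function.iterate_succ_apply',
      Function.iterate_succ_apply', ih, Real.sqrt_mul (iterSqrt_nonneg' k hu)]

lemma iterSqrt_sq (m : ℕ) {u : ℝ} (hu : 0 ≤ u) :
    Real.sqrt^[m] (u ^ 2) = (Real.sqrt^[m] u) ^ 2 := by
  rw [pow_two, pow_two, iterSqrt_mul m hu hu]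

lemma iterSqrt_pow (m : ℕ) {u : ℝ} (hu : 0 ≤ u) :
    (Real.sqrt^[m] u) ^ (2 ^ m) = u := by
  induction m generalizing u with
  | zero => simpa
  | succ k ih =>
    rw [Function.iterate_succ_apply, pow_succ, pow_mul]
    rw [ih (Real.sqrt_nonneg u)]
    exact Real.sq_sqrt hu

lemma le_iterSqrt (m : ℕ) {u : ℝ} (hu0 : 0 ≤ u) (hu1 : u ≤ 1) :
    u ≤ Real.sqrt^[m] u := by
  induction m with
  | zero => simp
  | succ k ih =>
    rw [Function.iterate_succ_apply']
    have h0 : 0 ≤ Real.sqrt^[k] u := iterSqrt_nonneg' k hu0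
    have h1 : Real.sqrt^[k] u ≤ 1 := iterSqrt_le_one k hu0 hu1
    calc u ≤ Real.sqrt^[k] u := ih
    _ = Real.sqrt ((Real.sqrt^[k] u) ^ 2) := (Real.sqrt_sq h0).symm
    _ ≤ Real.sqrt (Real.sqrt^[k] u) := Real.sqrt_le_sqrt (by nlinarith)

lemma exists_iterSqrt_lt_two {v : ℝ} (hv : 1 ≤ v) : ∃ m, Real.sqrt^[m] v < 2 := by
  have key : ∀ m, Real.sqrt^[m] v ≤ 1 + (v - 1) / 2 ^ m := by
    intro m
    induction m generalizing v hv with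
    | zero => simp
    | succ k ih =>
      rw [Function.iterate_succ_apply]
      have h1 : (1:ℝ) ≤ Real.sqrt v := one_le_iterSqrt 1 hv
      calc Real.sqrt^[k] (Real.sqrt v) ≤ 1 + (Real.sqrt v - 1) / 2 ^ k := ih h1
      _ ≤ 1 + (v - 1) / 2 ^ (k + 1) := by
          have hs : Real.sqrt v ≤ (v + 1) / 2 := by
            rw [show (v+1)/2 = Real.sqrt (((v+1)/2)^2) from
              (Real.sqrt_sq (by linarith)).symm]
            apply Real.sqrt_le_sqrt
            nlinarith
          have h2 : (0:ℝ) < 2 ^ k := by positivity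
          rw [pow_succ]
          have : (√v - 1) / 2 ^ k ≤ (v - 1) / (2 ^ k * 2) := by
            rw [div_le_div_iff₀ h2 (by positivity)]
            nlinarith
          linarith
  obtain ⟨n, hn⟩ := pow_unbounded_of_one_lt (v - 1) (one_lt_two (α := ℝ))
  refine ⟨n, lt_of_le_of_lt (key n) ?_⟩
  have h2 : (0:ℝ) < 2 ^ n := by positivity
  have : (v - 1) / 2 ^ n < 1 := (div_lt_one h2).mpr hn
  linarith







variable {Ω : Type*} {m0 : MeasurableSpace Ω} {P : Measure Ω} [IsProbabilityMeasure P]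

lemma integrable_of_bound {f : Ω → ℝ} (hf : StronglyMeasurable f) (C : ℝ)
    (h : ∀ ω, |f ω| ≤ C) : Integrable f P :=
  ⟨hf.aestronglyMeasurable, HasFiniteIntegral.of_bounded (C := C) (ae_of_all _ fun ω => by
    simpa [Real.norm_eq_abs] using h ω)⟩

/-- Key conditional expectation step. -/
lemma condexp_step {m : MeasurableSpace Ω} (hm : m ≤ m0)
    {A : Set Ω} (hA : MeasurableSet[m0] A)
    {f F G : Ω → ℝ}
    (hfm : StronglyMeasurable[m0] f)
    (hFm : StronglyMeasurable[m] F) (hGm : StronglyMeasurable[m] G)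
    (hfb : ∀ ω, |f ω| ≤ 1) (hFb : ∀ ω, |F ω| ≤ 1) (hGb : ∀ ω, |G ω| ≤ 1)
    (hG0 : ∀ ω, 0 ≤ G ω)
    (hpt : ∀ ω, f ω ≤ F ω - A.indicator (fun _ => (1:ℝ)) ω * G ω)
    (hE : ∀ᵐ ω ∂P, (1:ℝ)/2 ≤ (P[A.indicator (fun _ => (1:ℝ)) | m]) ω) :
    P[f | m] ≤ᵐ[P] fun ω => F ω - G ω / 2 := by
  haveI : SigmaFinite (P.trim hm) := by infer_instance
  set ind : Ω → ℝ := A.indicator (fun _ => (1:ℝ)) with hind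
  have hind_meas : StronglyMeasurable[m0] ind := stronglyMeasurable_const.indicator hA
  have hind_int : Integrable ind P :=
    integrable_of_bound hind_meas 1 (fun ω => by
      by_cases h : ω ∈ A <;> simp [ind, h])
  have hFm0 : StronglyMeasurable[m0] F := hFm.mono hm
  have hGm0 : StronglyMeasurable[m0] G := hGm.mono hm
  have hFint : Integrable F P := integrable_of_bound hFm0 1 hFb
  have hGind_meas : StronglyMeasurable[m0] (G * ind) := hGm0.mul hind_meas
  have hGind_int : Integrable (G * ind) P :=
    integrable_of_bound hGind_meas 1 (fun ω => by
      have := hGb ω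
      have h2 : |ind ω| ≤ 1 := by by_cases h : ω ∈ A <;> simp [ind, h]
      calc |(G * ind) ω| = |G ω| * |ind ω| := abs_mul _ _
      _ ≤ 1 * 1 := mul_le_mul (hGb ω) h2 (abs_nonneg _) zero_le_one
      _ = 1 := one_mul 1)
  have hfint : Integrable f P := integrable_of_bound hfm 1 hfb
  have hRint : Integrable (F - G * ind) P := hFint.sub hGind_int
  have h1 : P[f | m] ≤ᵐ[P] P[F - G * ind | m] :=
    condExp_mono hfint hRint (ae_of_all _ fun ω => by
      have := hpt ω
      simp only [Pi.sub_apply, Pi.mul_apply]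
      linarith [hpt ω, mul_comm (G ω) (ind ω)])
  have h2 : P[F - G * ind | m] =ᵐ[P] P[F | m] - P[G * ind | m] :=
    condExp_sub hFint hGind_int m
  have h3 : P[F | m] = F := condExp_of_stronglyMeasurable hm hFm hFint
  have h4 : P[G * ind | m] =ᵐ[P] G * P[ind | m] :=
    condExp_mul_of_stronglyMeasurable_left hGm hGind_int hind_int
  filter_upwards [h1, h2, h4, hE] with ω hw1 hw2 hw4 hwE
  have e2 : (P[F - G * ind | m]) ω = (P[F|m]) ω - (P[G * ind|m]) ω := by
    rw [hw2]; rfl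
  have e3 : (P[F|m]) ω = F ω := congrFun h3 ω
  have e4 : (P[G * ind|m]) ω = G ω * (P[ind|m]) ω := by rw [hw4]; rfl
  have hfin : (P[f|m]) ω ≤ F ω - G ω * (P[ind|m]) ω := by
    rw [e2, e3, e4] at hw1; exact hw1
  nlinarith [hG0 ω, hfin, hwE]







variable {Ω : Type*} {m0 : MeasurableSpace Ω} {P : Measure Ω} [IsProbabilityMeasure P]

lemma sum_integral_le {f d : ℕ → Ω → ℝ}
    (hstep : ∀ n, ∫ ω, f (n+1) ω ∂P ≤ ∫ ω, f n ω ∂P - ∫ ω, d n ω ∂P)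
    (hf0 : ∀ n, 0 ≤ ∫ ω, f n ω ∂P) (hf1 : ∫ ω, f 0 ω ∂P ≤ 1) :
    ∀ M, ∑ i ∈ Finset.range M, ∫ ω, d i ω ∂P ≤ 1 := by
  have key : ∀ M, ∑ i ∈ Finset.range M, ∫ ω, d i ω ∂P ≤
      ∫ ω, f 0 ω ∂P - ∫ ω, f M ω ∂P := by
    intro M
    induction M with
    | zero => simp
    | succ k ih =>
      rw [Finset.sum_range_succ]
      have := hstep k
      linarith
  intro M
  have := key M
  have := hf0 M
  linarith

lemma ae_tendsto_zero_of_sum_integral_le {d : ℕ → Ω → ℝ}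
    (hd : ∀ n, StronglyMeasurable (d n))
    (hnn : ∀ n ω, 0 ≤ d n ω) (hb : ∀ n ω, d n ω ≤ 1)
    (hsum : ∀ M, ∑ i ∈ Finset.range M, ∫ ω, d i ω ∂P ≤ 1) :
    ∀ᵐ ω ∂P, Tendsto (fun n => d n ω) atTop (nhds 0) := by
  have hint : ∀ n, Integrable (d n) P := fun n =>
    ⟨(hd n).aestronglyMeasurable, HasFiniteIntegral.of_bounded (C := 1)
      (ae_of_all _ fun ω => by
        rw [Real.norm_eq_abs, abs_of_nonneg (hnn n ω)]; exact hb n ω)⟩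
  have ha0 : ∀ n, 0 ≤ ∫ ω, d n ω ∂P := fun n => integral_nonneg (hnn n)
  have hsummable : Summable (fun n => ∫ ω, d n ω ∂P) :=
    summable_of_sum_range_le ha0 hsum
  have hlin : ∀ n, ∫⁻ ω, ENNReal.ofReal (d n ω) ∂P
      = ENNReal.ofReal (∫ ω, d n ω ∂P) :=
    fun n => (ofReal_integral_eq_lintegral_ofReal (hint n)
      (ae_of_all _ (hnn n))).symm
  have key : ∫⁻ ω, ∑' n, ENNReal.ofReal (d n ω) ∂P ≠ ⊤ := by
    rw [lintegral_tsum (fun n => ((hd n).measurable.ennreal_ofReal).aemeasurable)]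
    simp_rw [hlin]
    rw [← ENNReal.ofReal_tsum_of_nonneg ha0 hsummable]
    exact ENNReal.ofReal_ne_top
  have hae : ∀ᵐ ω ∂P, ∑' n, ENNReal.ofReal (d n ω) < ⊤ :=
    ae_lt_top (by
      exact Measurable.ennreal_tsum (fun n => (hd n).measurable.ennreal_ofReal)) key
  filter_upwards [hae] with ω hω
  have h1 : Tendsto (fun n => ENNReal.ofReal (d n ω)) atTop (nhds 0) :=
    ENNReal.tendsto_atTop_zero_of_tsum_ne_top hω.ne
  have h2 : Tendsto (fun n => (ENNReal.ofReal (d n ω)).toReal) atTop (nhds 0) := by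
    have := (ENNReal.tendsto_toReal (by simp)).comp h1
    simpa [Function.comp_def] using this
  refine h2.congr fun n => ?_
  exact ENNReal.toReal_ofReal (hnn n ω)







/-- The `φ`-transformed process stopped when `U` drops below `c` (after time `N`). -/
noncomputable def Vproc {Ω : Type*} (U : ℕ → Ω → ℝ) (c : ℝ) (β : ℕ) (N : ℕ) : ℕ → Ω → ℝ
  | 0 => fun ω => 1 - (1 - U N ω) ^ β
  | (n+1) => ({ω | ∀ k ≤ n, c ≤ U (N+k) ω}).piecewise
      (fun ω => 1 - (1 - U (N+n+1) ω) ^ β) (Vproc U c β N n)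

lemma Vproc_succ {Ω : Type*} (U : ℕ → Ω → ℝ) (c : ℝ) (β : ℕ) (N n : ℕ) :
    Vproc U c β N (n+1) = ({ω | ∀ k ≤ n, c ≤ U (N+k) ω}).piecewise
      (fun ω => 1 - (1 - U (N+n+1) ω) ^ β) (Vproc U c β N n) := rfl

lemma Vproc_eq_of_mem {Ω : Type*} (U : ℕ → Ω → ℝ) (c : ℝ) (β : ℕ) (N n : ℕ) (ω : Ω)
    (hω : ∀ k ≤ n, c ≤ U (N+k) ω) :
    Vproc U c β N n ω = 1 - (1 - U (N+n) ω) ^ β := by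
  cases n with
  | zero => rfl
  | succ k =>
    rw [Vproc_succ]
    exact Set.piecewise_eq_of_mem _ _ _ (fun j hj => hω j (hj.trans (Nat.le_succ k)))

lemma Vproc_mem_Icc {Ω : Type*} (U : ℕ → Ω → ℝ) (c : ℝ) (β : ℕ) (N : ℕ)
    (h01 : ∀ n ω, U n ω ∈ Set.Icc (0:ℝ) 1) :
    ∀ n ω, Vproc U c β N n ω ∈ Set.Icc (0:ℝ) 1 := by
  have hφ : ∀ j ω, (1 - (1 - U j ω) ^ β) ∈ Set.Icc (0:ℝ) 1 := by
    intro j ω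
    have h1 := (h01 j ω).1
    have h2 := (h01 j ω).2
    have hp0 : 0 ≤ (1 - U j ω) ^ β := pow_nonneg (by linarith) β
    have hp1 : (1 - U j ω) ^ β ≤ 1 := pow_le_one₀ (by linarith) (by linarith)
    constructor <;> simp <;> linarith
  intro n ω
  induction n with
  | zero => exact hφ N ω
  | succ k ih =>
    rw [Vproc_succ]
    by_cases hω : ω ∈ {ω | ∀ j ≤ k, c ≤ U (N+j) ω}
    · rw [Set.piecewise_eq_of_mem _ _ _ hω]; exact hφ _ ω
    · rw [Set.piecewise_eq_of_notMem _ _ _ hω]; exact ih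






lemma bottom_ineq {s a x : ℝ} (hs : 1 ≤ s) (ha : a = 2 - s)
    (hx0 : 0 ≤ x) (hx1 : x ≤ 1) :
    min (s*x) a - (min (s*x) a - min (x^2) a)/2
      ≤ min x a - min x a * (a - min x a)/2 := by
  rcases le_or_gt a x with h | h
  · rw [min_eq_right h]
    have h1 : min (s*x) a ≤ a := min_le_right _ _
    have h2 : min (x^2) a ≤ a := min_le_right _ _
    linarith
  · rw [min_eq_left h.le]
    have hxx : x^2 ≤ x := by nlinarith
    rw [min_eq_left (by linarith : x^2 ≤ a)]
    have h1 : min (s*x) a ≤ s*x := min_le_left _ _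
    nlinarith





end PolarAux

set_option maxHeartbeats 2000000

/-- a `[0,1]`-valued adapted process that squares with conditional probability at
least `1/2` and grows at most by a factor `q` converges to `0` or `1` almost surely: there are
events `Ω₀`, `Ω₁` of total probability one on which `Uₙ → 0`, resp. `Uₙ → 1`. -/
theorem polarization_process_converges {Ω : Type*} {m0 : MeasurableSpace Ω}
    (P : Measure Ω) [IsProbabilityMeasure P] (ℱ : Filtration ℕ m0)
    (U : ℕ → Ω → ℝ) (hadp : Adapted ℱ U)
    (h01 : ∀ n ω, U n ω ∈ Set.Icc (0 : ℝ) 1)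
    (hsq : ∀ n, ∀ᵐ ω ∂P,
      (1 : ℝ) / 2 ≤
        MeasureTheory.condExp (ℱ n) P
          (Set.indicator {ω' | U (n + 1) ω' = (U n ω') ^ 2} (fun _ => (1 : ℝ))) ω)
    (q : ℕ) (hq : 0 < q)
    (hbd : ∀ n ω, U (n + 1) ω ≤ (q : ℝ) * U n ω) :
    ∃ Ω0 Ω1 : Set Ω, MeasurableSet Ω0 ∧ MeasurableSet Ω1 ∧ P (Ω0 ∪ Ω1) = 1 ∧
      (∀ ω ∈ Ω0, Tendsto (fun n => U n ω) atTop (nhds 0)) ∧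
      (∀ ω ∈ Ω1, Tendsto (fun n => U n ω) atTop (nhds 1)) := by
  classical
  have hU0 : ∀ n ω, 0 ≤ U n ω := fun n ω => (h01 n ω).1
  have hU1 : ∀ n ω, U n ω ≤ 1 := fun n ω => (h01 n ω).2
  have hUsm : ∀ n, StronglyMeasurable[m0] (U n) := fun n => ((hadp n).mono (ℱ.le n) le_rfl).stronglyMeasurable
  have hUm : ∀ n, Measurable (U n) := fun n => (hUsm n).measurable
  have hq1 : (1:ℝ) ≤ (q:ℝ) := by exact_mod_cast hq
  obtain ⟨m, hm2⟩ := PolarAux.exists_iterSqrt_lt_two (v := (q:ℝ)) hq1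
  set s : ℝ := Real.sqrt^[m] q with hs
  have hs1 : 1 ≤ s := PolarAux.one_le_iterSqrt m hq1
  set a : ℝ := 2 - s with ha
  have ha0 : 0 < a := by simp only [ha]; linarith
  have ha1 : a ≤ 1 := by simp only [ha]; linarith
  set X : ℕ → Ω → ℝ := fun n ω => Real.sqrt^[m] (U n ω) with hX
  set Y : ℕ → Ω → ℝ := fun n ω => min (X n ω) a with hY
  have hX0 : ∀ n ω, 0 ≤ X n ω := fun n ω => PolarAux.iterSqrt_nonneg' m (hU0 n ω)
  have hX1 : ∀ n ω, X n ω ≤ 1 := fun n ω => PolarAux.iterSqrt_le_one m (hU0 n ω) (hU1 n ω)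
  have hUX : ∀ n ω, U n ω ≤ X n ω := fun n ω =>
    PolarAux.le_iterSqrt m (hU0 n ω) (hU1 n ω)
  have hXpow : ∀ n ω, (X n ω) ^ (2^m) = U n ω := fun n ω =>
    PolarAux.iterSqrt_pow m (hU0 n ω)
  have hY0 : ∀ n ω, 0 ≤ Y n ω := fun n ω => le_min (hX0 n ω) ha0.le
  have hYa : ∀ n ω, Y n ω ≤ a := fun n ω => min_le_right _ _
  have hY1 : ∀ n ω, |Y n ω| ≤ 1 := fun n ω => by
    rw [abs_of_nonneg (hY0 n ω)]; exact (hYa n ω).trans ha1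
  -- measurability
  have hsqrtcont : Continuous (Real.sqrt^[m]) := Real.continuous_sqrt.iterate m
  have hXsm : ∀ n, StronglyMeasurable[ℱ n] (X n) := fun n =>
    hsqrtcont.comp_stronglyMeasurable (hadp n).stronglyMeasurable
  have hYsm : ∀ n, StronglyMeasurable[ℱ n] (Y n) := fun n =>
    ((hXsm n).measurable.min measurable_const).stronglyMeasurable
  have hYsm0 : ∀ n, StronglyMeasurable[m0] (Y n) := fun n => (hYsm n).mono (ℱ.le n)
  set A : ℕ → Set Ω := fun n => {ω' | U (n+1) ω' = (U n ω')^2} with hA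
  have hAmeas : ∀ n, MeasurableSet[m0] (A n) := fun n =>
    measurableSet_eq_fun (hUm (n+1)) ((hUm n).pow_const 2)
  -- The d-process for the bottom supermartingale
  set dY : ℕ → Ω → ℝ := fun n ω => Y n ω * (a - Y n ω) / 2 with hdY
  have hdY0 : ∀ n ω, 0 ≤ dY n ω := fun n ω => by
    have h1 := hY0 n ω; have h2 := hYa n ω
    simp only [hdY]
    exact div_nonneg (mul_nonneg h1 (by linarith : 0 ≤ a - Y n ω)) (by norm_num)
  have hdY1 : ∀ n ω, dY n ω ≤ 1 := fun n ω => by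
    have h1 := hY0 n ω; have h2 := hYa n ω
    simp only [hdY]; nlinarith
  have hdYsm0 : ∀ n, StronglyMeasurable[m0] (dY n) := fun n =>
    (((hYsm0 n).measurable.mul (measurable_const.sub (hYsm0 n).measurable)).div_const
      2).stronglyMeasurable
  -- Step A : one-step conditional expectation inequality for Y
  have hstepY : ∀ n, P[Y (n+1) | ℱ n] ≤ᵐ[P] fun ω => Y n ω - dY n ω := by
    intro n
    have hFsm : StronglyMeasurable[ℱ n] (fun ω => min (s * X n ω) a) :=
      (((hXsm n).measurable.const_mul s).min measurable_const).stronglyMeasurable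
    have hGsm : StronglyMeasurable[ℱ n]
        (fun ω => min (s * X n ω) a - min ((X n ω)^2) a) :=
      hFsm.sub ((((hXsm n).measurable.pow_const 2).min
        measurable_const).stronglyMeasurable)
    have hG0 : ∀ ω, 0 ≤ min (s * X n ω) a - min ((X n ω)^2) a := by
      intro ω
      have hx0 := hX0 n ω; have hx1 := hX1 n ω
      have : (X n ω)^2 ≤ s * X n ω := by nlinarith
      have := min_le_min this (le_refl a)
      linarith
    have hFb : ∀ ω, |min (s * X n ω) a| ≤ 1 := by
      intro ω
      have hx0 := hX0 n ω
      rw [abs_of_nonneg (le_min (by nlinarith) ha0.le)]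
      exact (min_le_right _ _).trans ha1
    have hGb : ∀ ω, |min (s * X n ω) a - min ((X n ω)^2) a| ≤ 1 := by
      intro ω
      have hx0 := hX0 n ω
      have h1 := hG0 ω
      rw [abs_of_nonneg h1]
      have h2 : min (s * X n ω) a ≤ a := min_le_right _ _
      have h3 : 0 ≤ min ((X n ω)^2) a := le_min (by positivity) ha0.le
      linarith
    have hpt : ∀ ω, Y (n+1) ω ≤ (fun ω => min (s * X n ω) a) ω -
        (A n).indicator (fun _ => (1:ℝ)) ω *
          (fun ω => min (s * X n ω) a - min ((X n ω)^2) a) ω := by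
      intro ω
      by_cases hω : ω ∈ A n
      · rw [Set.indicator_of_mem hω]
        have hU2 : U (n+1) ω = (U n ω)^2 := hω
        have hXsq : X (n+1) ω = (X n ω)^2 := by
          simp only [hX]
          rw [hU2, PolarAux.iterSqrt_sq m (hU0 n ω)]
        have : Y (n+1) ω = min ((X n ω)^2) a := by
          simp only [hY, hXsq]
        rw [this]; dsimp only; linarith
      · rw [Set.indicator_of_notMem hω]
        have hXle : X (n+1) ω ≤ s * X n ω := by
          simp only [hX, hs]
          calc Real.sqrt^[m] (U (n+1) ω) ≤ Real.sqrt^[m] ((q:ℝ) * U n ω) :=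
                PolarAux.iterSqrt_mono m (hbd n ω)
          _ = Real.sqrt^[m] (q:ℝ) * Real.sqrt^[m] (U n ω) :=
                PolarAux.iterSqrt_mul m (by positivity) (hU0 n ω)
        have := min_le_min hXle (le_refl a)
        simp only [hY]
        simpa using this
    have hkey := PolarAux.condexp_step (P := P) (ℱ.le n) (hAmeas n)
      (hYsm0 (n+1)) hFsm hGsm (hY1 (n+1)) hFb hGb hG0 hpt (hsq n)
    refine hkey.trans (ae_of_all _ fun ω => ?_)
    have := PolarAux.bottom_ineq (s := s) (a := a) (x := X n ω) hs1 ha (hX0 n ω) (hX1 n ω)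
    simp only [hY, hdY]
    linarith
  -- Integrability
  have hYint : ∀ n, Integrable (Y n) P :=
    fun n => PolarAux.integrable_of_bound (hYsm0 n) 1 (hY1 n)
  have hdYint : ∀ n, Integrable (dY n) P :=
    fun n => PolarAux.integrable_of_bound (hdYsm0 n) 1 (fun ω => by
      rw [abs_of_nonneg (hdY0 n ω)]; exact hdY1 n ω)
  -- Step B : integral recurrence and summability for dY
  have hint_stepY : ∀ n, ∫ ω, Y (n+1) ω ∂P ≤ ∫ ω, Y n ω ∂P - ∫ ω, dY n ω ∂P := by
    intro n
    have h1 : ∫ ω, (P[Y (n+1) | ℱ n]) ω ∂P = ∫ ω, Y (n+1) ω ∂P :=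
      integral_condExp (ℱ.le n)
    have h2 : ∫ ω, (P[Y (n+1) | ℱ n]) ω ∂P ≤ ∫ ω, (Y n ω - dY n ω) ∂P :=
      integral_mono_ae integrable_condExp ((hYint n).sub (hdYint n)) (hstepY n)
    rw [integral_sub (hYint n) (hdYint n)] at h2
    linarith [h1 ▸ h2]
  have hY0int : ∀ n, 0 ≤ ∫ ω, Y n ω ∂P := fun n => integral_nonneg (hY0 n)
  have hY0le1 : ∫ ω, Y 0 ω ∂P ≤ 1 := by
    calc ∫ ω, Y 0 ω ∂P ≤ ∫ _ω, (1:ℝ) ∂P :=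
      integral_mono (hYint 0) (integrable_const 1) (fun ω => by
        have := hY1 0 ω; rw [abs_le] at this; exact this.2)
    _ = 1 := by simp
  have hsumY := PolarAux.sum_integral_le hint_stepY hY0int hY0le1
  have hdYae : ∀ᵐ ω ∂P, Tendsto (fun n => dY n ω) atTop (nhds 0) :=
    PolarAux.ae_tendsto_zero_of_sum_integral_le hdYsm0 hdY0 hdY1 hsumY
  -- Step C : supermartingale convergence for Y
  have hsupY : Supermartingale Y ℱ P :=
    supermartingale_nat (fun n => hYsm n) hYint (fun n =>
      (hstepY n).trans (ae_of_all _ fun ω => by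
        have := hdY0 n ω; dsimp only; linarith))
  have hbddY : ∀ n, eLpNorm ((-Y) n) 1 P ≤ ((1:ℝ≥0) : ℝ≥0∞) := by
    intro n
    have := eLpNorm_le_of_ae_bound (p := 1) (μ := P) (f := (-Y) n) (C := 1)
      (ae_of_all _ fun ω => by
        simp only [Pi.neg_apply, Real.norm_eq_abs, abs_neg]; exact hY1 n ω)
    simpa using this
  have hYconv := (hsupY.neg.ae_tendsto_limitProcess hbddY)
  -- Step D : the top process
  set c : ℝ := (a/2)^(2^m) with hc
  have hc0 : 0 < c := by positivity
  have hc1 : c < 1 := by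
    apply pow_lt_one₀ (by positivity) (by linarith)
    positivity
  obtain ⟨β, hβ⟩ := pow_unbounded_of_one_lt (3:ℝ) (show (1:ℝ) < 1 + c by linarith)
  set V : ℕ → ℕ → Ω → ℝ := PolarAux.Vproc U c β with hV
  set CS : ℕ → ℕ → Set Ω := fun N n => {ω | ∀ k ≤ n, c ≤ U (N+k) ω} with hCS
  have hVIcc : ∀ N n ω, V N n ω ∈ Set.Icc (0:ℝ) 1 :=
    fun N => PolarAux.Vproc_mem_Icc U c β N h01
  have hCSmeas : ∀ N n, MeasurableSet[ℱ (N+n)] (CS N n) := by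
    intro N n
    have : CS N n = ⋂ k ∈ Finset.range (n+1), {ω | c ≤ U (N+k) ω} := by
      ext ω; simp [hCS, Nat.lt_succ_iff]
    rw [this]
    refine MeasurableSet.biInter (Finset.range (n+1)).countable_toSet (fun k hk => ?_)
    have hk' : k ≤ n := Nat.lt_succ_iff.mp (Finset.mem_range.mp hk)
    exact measurableSet_le measurable_const
      ((hadp (N+k)).mono (ℱ.mono (by omega)) le_rfl)
  have hVsm : ∀ N n, StronglyMeasurable[ℱ (N+n)] (V N n) := by
    intro N n
    induction n with
    | zero =>
      exact (continuous_const.sub ((continuous_const.sub continuous_id).pow β)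
        ).comp_stronglyMeasurable (hadp N).stronglyMeasurable
    | succ k ih =>
      rw [hV, PolarAux.Vproc_succ]
      refine StronglyMeasurable.piecewise ?_ ?_ ?_
      · exact (ℱ.mono (by omega)) _ (hCSmeas N k)
      · exact (continuous_const.sub ((continuous_const.sub continuous_id).pow β)
          ).comp_stronglyMeasurable (hadp (N+k+1)).stronglyMeasurable
      · exact ih.mono (ℱ.mono (by omega))
  have hVsm0 : ∀ N n, StronglyMeasurable[m0] (V N n) :=
    fun N n => (hVsm N n).mono (ℱ.le _)
  set dV : ℕ → ℕ → Ω → ℝ := fun N n => (CS N n).indicator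
    (fun ω => (1 - (U (N+n) ω)^2)^β / 2 - (1 - U (N+n) ω)^β) with hdV
  have hhnn : ∀ {u : ℝ}, c ≤ u → u ≤ 1 →
      0 ≤ (1 - u^2)^β / 2 - (1 - u)^β ∧ (1 - u^2)^β / 2 - (1 - u)^β ≤ 1 := by
    intro u hcu hu1
    have h1 : (1 - u^2) = (1 - u) * (1 + u) := by ring
    have h2 : (1 - u^2)^β = (1-u)^β * (1+u)^β := by rw [h1, mul_pow]
    have h3 : (3:ℝ) ≤ (1+u)^β := by
      calc (3:ℝ) ≤ (1+c)^β := hβ.le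
      _ ≤ (1+u)^β := pow_le_pow_left₀ (by linarith) (by linarith) β
    have h4 : 0 ≤ (1-u)^β := pow_nonneg (by linarith) β
    have h5 : (1-u)^β ≤ 1 := pow_le_one₀ (by linarith) (by linarith)
    have h6 : (1 - u^2)^β ≤ 1 := pow_le_one₀ (by nlinarith) (by nlinarith)
    constructor
    · rw [h2]; nlinarith
    · nlinarith
  have hdVnn : ∀ N n ω, 0 ≤ dV N n ω := by
    intro N n ω
    simp only [hdV]
    by_cases hω : ω ∈ CS N n
    · rw [Set.indicator_of_mem hω]
      exact (hhnn (hω n (le_refl n)) (hU1 _ ω)).1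
    · rw [Set.indicator_of_notMem hω]
  have hdVle1 : ∀ N n ω, dV N n ω ≤ 1 := by
    intro N n ω
    simp only [hdV]
    by_cases hω : ω ∈ CS N n
    · rw [Set.indicator_of_mem hω]
      exact (hhnn (hω n (le_refl n)) (hU1 _ ω)).2
    · rw [Set.indicator_of_notMem hω]; exact zero_le_one
  have hdVsm0 : ∀ N n, StronglyMeasurable[m0] (dV N n) := by
    intro N n
    refine StronglyMeasurable.indicator ?_ ((ℱ.le _) _ (hCSmeas N n))
    exact ((((measurable_const.sub ((hUm (N+n)).pow_const 2)).pow_const β).div_const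
      2).sub ((measurable_const.sub (hUm (N+n))).pow_const β)).stronglyMeasurable
  -- Step D' : one-step inequality for V
  have hstepV : ∀ N n, P[V N (n+1) | ℱ (N+n)] ≤ᵐ[P] fun ω => V N n ω - dV N n ω := by
    intro N n
    set F : Ω → ℝ := (CS N n).piecewise (fun _ => (1:ℝ)) (V N n) with hF
    set G : Ω → ℝ := (CS N n).indicator (fun ω => (1 - (U (N+n) ω)^2)^β) with hG
    have hFsm : StronglyMeasurable[ℱ (N+n)] F :=
      StronglyMeasurable.piecewise (hCSmeas N n) stronglyMeasurable_const (hVsm N n)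
    have hGsm : StronglyMeasurable[ℱ (N+n)] G :=
      StronglyMeasurable.indicator
        (((measurable_const.sub ((hadp (N+n)).pow_const 2)).pow_const
          β).stronglyMeasurable) (hCSmeas N n)
    have hG01 : ∀ ω, 0 ≤ G ω ∧ G ω ≤ 1 := by
      intro ω
      simp only [hG]
      by_cases hω : ω ∈ CS N n
      · rw [Set.indicator_of_mem hω]
        have h1 := hU0 (N+n) ω; have h2 := hU1 (N+n) ω
        exact ⟨pow_nonneg (by nlinarith) β, pow_le_one₀ (by nlinarith) (by nlinarith)⟩
      · rw [Set.indicator_of_notMem hω]; exact ⟨le_refl 0, zero_le_one⟩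
    have hFb : ∀ ω, |F ω| ≤ 1 := by
      intro ω
      simp only [hF]
      by_cases hω : ω ∈ CS N n
      · rw [Set.piecewise_eq_of_mem _ _ _ hω]; simp
      · rw [Set.piecewise_eq_of_notMem _ _ _ hω]
        rw [abs_of_nonneg (hVIcc N n ω).1]; exact (hVIcc N n ω).2
    have hVb : ∀ k ω, |V N k ω| ≤ 1 := fun k ω => by
      rw [abs_of_nonneg (hVIcc N k ω).1]; exact (hVIcc N k ω).2
    have hpt : ∀ ω, V N (n+1) ω ≤ F ω - (A (N+n)).indicator (fun _ => (1:ℝ)) ω * G ω := by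
      intro ω
      by_cases hω : ω ∈ CS N n
      · have hV1 : V N (n+1) ω = 1 - (1 - U (N+n+1) ω)^β := by
          rw [hV, PolarAux.Vproc_succ]
          exact Set.piecewise_eq_of_mem _ _ _ hω
        have hFω : F ω = 1 := Set.piecewise_eq_of_mem _ _ _ hω
        have hGω : G ω = (1 - (U (N+n) ω)^2)^β := Set.indicator_of_mem hω _
        by_cases hωA : ω ∈ A (N+n)
        · rw [Set.indicator_of_mem hωA]
          have hU2 : U (N+n+1) ω = (U (N+n) ω)^2 := hωA
          rw [hV1, hFω, hGω, hU2]
          simp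
        · rw [Set.indicator_of_notMem hωA]
          rw [hV1, hFω]
          have : 0 ≤ (1 - U (N+n+1) ω)^β := pow_nonneg (by linarith [hU1 (N+n+1) ω]) β
          linarith
      · have hV1 : V N (n+1) ω = V N n ω := by
          rw [hV, PolarAux.Vproc_succ]
          exact Set.piecewise_eq_of_notMem _ _ _ hω
        have hFω : F ω = V N n ω := Set.piecewise_eq_of_notMem _ _ _ hω
        have hGω : G ω = 0 := Set.indicator_of_notMem hω _
        rw [hV1, hFω, hGω]
        simp
    have hkey := PolarAux.condexp_step (P := P) (ℱ.le (N+n)) (hAmeas (N+n))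
      (hVsm0 N (n+1)) hFsm hGsm (hVb (n+1)) hFb
      (fun ω => by rw [abs_of_nonneg (hG01 ω).1]; exact (hG01 ω).2)
      (fun ω => (hG01 ω).1) hpt (hsq (N+n))
    refine hkey.trans (ae_of_all _ fun ω => ?_)
    dsimp only
    by_cases hω : ω ∈ CS N n
    · have hFω : F ω = 1 := Set.piecewise_eq_of_mem _ _ _ hω
      have hGω : G ω = (1 - (U (N+n) ω)^2)^β := Set.indicator_of_mem hω _
      have hVω : V N n ω = 1 - (1 - U (N+n) ω)^β :=
        PolarAux.Vproc_eq_of_mem U c β N n ω hω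
      have hdVω : dV N n ω = (1 - (U (N+n) ω)^2)^β / 2 - (1 - U (N+n) ω)^β :=
        Set.indicator_of_mem hω _
      rw [hFω, hGω, hVω, hdVω]; linarith
    · have hFω : F ω = V N n ω := Set.piecewise_eq_of_notMem _ _ _ hω
      have hGω : G ω = 0 := Set.indicator_of_notMem hω _
      have hdVω : dV N n ω = 0 := Set.indicator_of_notMem hω _
      rw [hFω, hGω, hdVω]; simp
  -- integrability for V and dV
  have hVint : ∀ N n, Integrable (V N n) P := fun N n =>
    PolarAux.integrable_of_bound (hVsm0 N n) 1 (fun ω => by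
      rw [abs_of_nonneg (hVIcc N n ω).1]; exact (hVIcc N n ω).2)
  have hdVint : ∀ N n, Integrable (dV N n) P := fun N n =>
    PolarAux.integrable_of_bound (hdVsm0 N n) 1 (fun ω => by
      rw [abs_of_nonneg (hdVnn N n ω)]; exact hdVle1 N n ω)
  have hint_stepV : ∀ N n, ∫ ω, V N (n+1) ω ∂P ≤ ∫ ω, V N n ω ∂P - ∫ ω, dV N n ω ∂P := by
    intro N n
    have h1 : ∫ ω, (P[V N (n+1) | ℱ (N+n)]) ω ∂P = ∫ ω, V N (n+1) ω ∂P :=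
      integral_condExp (ℱ.le (N+n))
    have h2 : ∫ ω, (P[V N (n+1) | ℱ (N+n)]) ω ∂P ≤ ∫ ω, (V N n ω - dV N n ω) ∂P :=
      integral_mono_ae integrable_condExp ((hVint N n).sub (hdVint N n)) (hstepV N n)
    rw [integral_sub (hVint N n) (hdVint N n)] at h2
    linarith [h1 ▸ h2]
  have hdVae : ∀ᵐ ω ∂P, ∀ N, Tendsto (fun n => dV N n ω) atTop (nhds 0) := by
    rw [ae_all_iff]
    intro N
    refine PolarAux.ae_tendsto_zero_of_sum_integral_le (hdVsm0 N) (hdVnn N) (hdVle1 N) ?_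
    refine PolarAux.sum_integral_le (hint_stepV N)
      (fun n => integral_nonneg (fun ω => (hVIcc N n ω).1)) ?_
    calc ∫ ω, V N 0 ω ∂P ≤ ∫ _ω, (1:ℝ) ∂P :=
      integral_mono (hVint N 0) (integrable_const 1) (fun ω => (hVIcc N 0 ω).2)
    _ = 1 := by simp
  -- Step E : assembly
  set Ω0 : Set Ω := {ω | Tendsto (fun n => U n ω) atTop (nhds (0:ℝ))} with hΩ0
  set Ω1 : Set Ω := {ω | Tendsto (fun n => U n ω) atTop (nhds (1:ℝ))} with hΩ1
  have hΩ0meas : MeasurableSet Ω0 := measurableSet_tendsto _ hUm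
  have hΩ1meas : MeasurableSet Ω1 := measurableSet_tendsto _ hUm
  refine ⟨Ω0, Ω1, hΩ0meas, hΩ1meas, ?_, fun ω h => h, fun ω h => h⟩
  -- probability one
  have hae : ∀ᵐ ω ∂P, ω ∈ Ω0 ∪ Ω1 := by
    filter_upwards [hYconv, hdYae, hdVae] with ω hconv hd0 hdVω
    have hYten : Tendsto (fun n => Y n ω) atTop (nhds (-(ℱ.limitProcess (-Y) P ω))) := by
      have := hconv.neg
      simp only [Pi.neg_apply, neg_neg] at this
      exact this
    set y : ℝ := -(ℱ.limitProcess (-Y) P ω) with hy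
    have hylim : y * (a - y) / 2 = 0 := by
      have h1 : Tendsto (fun n => dY n ω) atTop (nhds (y * (a - y) / 2)) := by
        simpa [hdY] using ((hYten.mul (tendsto_const_nhds.sub hYten)).div_const 2)
      exact tendsto_nhds_unique h1 hd0
    have hylim' : y * (a - y) = 0 := by
      rcases div_eq_zero_iff.mp hylim with h | h
      · exact h
      · norm_num at h
    have hcases : y = 0 ∨ y = a := by
      rcases mul_eq_zero.mp hylim' with h | h
      · exact Or.inl h
      · exact Or.inr (by linarith)
    rcases hcases with hy0 | hya
    · -- U → 0
      left
      rw [hΩ0, Set.mem_setOf_eq, Metric.tendsto_atTop]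
      intro ε hε
      rw [hy0] at hYten
      obtain ⟨N, hN⟩ := Metric.tendsto_atTop.mp hYten (min ε a) (lt_min hε ha0)
      refine ⟨N, fun n hn => ?_⟩
      have h1 : |Y n ω - 0| < min ε a := hN n hn
      rw [sub_zero, abs_of_nonneg (hY0 n ω)] at h1
      have h2 : X n ω < ε := by
        rcases le_or_gt a (X n ω) with h | h
        · exfalso
          have : Y n ω = a := min_eq_right h
          rw [this] at h1
          exact absurd (h1.trans_le (min_le_right ε a)) (lt_irrefl a)
        · have : Y n ω = X n ω := min_eq_left h.le
          rw [this] at h1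
          exact h1.trans_le (min_le_left ε a)
      rw [Real.dist_eq, sub_zero, abs_of_nonneg (hU0 n ω)]
      exact (hUX n ω).trans_lt h2
    · -- U → 1
      right
      -- first: eventually U n ω ≥ c
      rw [hya] at hYten
      obtain ⟨N₀, hN₀⟩ := Metric.tendsto_atTop.mp hYten (a/2) (by linarith)
      have hUc : ∀ k, c ≤ U (N₀ + k) ω := by
        intro k
        have h1 : |Y (N₀+k) ω - a| < a/2 := hN₀ (N₀+k) (by omega)
        have h2 : a/2 < Y (N₀+k) ω := by
          rw [abs_lt] at h1; linarith [h1.1]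
        have h3 : a/2 ≤ X (N₀+k) ω := le_trans h2.le (min_le_left _ _)
        have h4 : (a/2)^(2^m) ≤ (X (N₀+k) ω)^(2^m) :=
          pow_le_pow_left₀ (by positivity) h3 _
        rw [hXpow (N₀+k) ω] at h4
        exact h4
      have hCSall : ∀ n, ω ∈ CS N₀ n := fun n k _ => hUc k
      have hdVeq : ∀ n, dV N₀ n ω =
          (1 - (U (N₀+n) ω)^2)^β / 2 - (1 - U (N₀+n) ω)^β := fun n =>
        Set.indicator_of_mem (hCSall n) _
      have hten := hdVω N₀
      rw [hΩ1, Set.mem_setOf_eq, Metric.tendsto_atTop]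
      intro ε hε
      set e : ℝ := min ε 1 with he
      have he0 : 0 < e := lt_min hε one_pos
      have hρ : 0 < e^β / 2 := by positivity
      obtain ⟨M, hM⟩ := Metric.tendsto_atTop.mp hten (e^β/2) hρ
      refine ⟨N₀ + M, fun n hn => ?_⟩
      obtain ⟨k, rfl⟩ : ∃ k, n = N₀ + k := ⟨n - N₀, by omega⟩
      have hkM : M ≤ k := by omega
      have h1 : |dV N₀ k ω - 0| < e^β/2 := hM k hkM
      rw [sub_zero, abs_of_nonneg (hdVnn N₀ k ω)] at h1
      rw [hdVeq k] at h1
      set u : ℝ := U (N₀+k) ω with hu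
      have hu1 : u ≤ 1 := hU1 _ ω
      have hcu : c ≤ u := hUc k
      have h2 : 1 - u < e := by
        by_contra hcon
        push_neg at hcon
        have h3 : e^β ≤ (1-u)^β := pow_le_pow_left₀ he0.le hcon β
        have h4 : (1 - u^2)^β = (1-u)^β * (1+u)^β := by
          rw [show (1:ℝ) - u^2 = (1-u)*(1+u) by ring, mul_pow]
        have h5 : (3:ℝ) ≤ (1+u)^β :=
          hβ.le.trans (pow_le_pow_left₀ (by linarith) (by linarith) β)
        have h6 : 0 ≤ (1-u)^β := pow_nonneg (by linarith) β
        nlinarith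
      rw [Real.dist_eq, abs_of_nonpos (by linarith : u - 1 ≤ 0)]
      have : e ≤ ε := min_le_left _ _
      linarith
  have h0 : P (Ω0 ∪ Ω1)ᶜ = 0 := by
    have := hae
    rwa [ae_iff] at this
  have := measure_add_measure_compl (μ := P) (hΩ0meas.union hΩ1meas)
  rw [h0, add_zero, measure_univ] at this
  exact this
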